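/- For a bounded self-adjoint operator H with a simple eigenvalue E and normalized eigenfunction φ, and any vectors u, v, we have |⟨u, φ⟩⟨φ, v⟩| ≤ sup_{t∈ℝ} |⟨u, e^{-itH} v⟩|. -/

import Mathlib

open scoped InnerProductSpace

section Aux

variable {H' : Type*} [NormedAddCommGroup H'] [InnerProductSpace ℂ H'] [CompleteSpace H']

/-- If a star-normal operator `X` with `‖X‖ < 2` satisfies `exp X ψ = ψ`, then `X ψ = 0`. -/
lemma aux_key_cfc [Nontrivial H'] (X : H' →L[ℂ] H') (hsn : IsStarNormal X) (hnorm : ‖X‖ < 2)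
    (ψ : H') (hψ : NormedSpace.exp X ψ = ψ) : X ψ = 0 := by
  have key : ∀ w ∈ spectrum ℂ X, Complex.exp w = 1 → w = 0 := by
    intro w hw hexp
    obtain ⟨n, rfl⟩ := Complex.exp_eq_one_iff.mp hexp
    have hle : ‖(n : ℂ) * (2 * Real.pi * Complex.I)‖ ≤ ‖X‖ := spectrum.norm_le_norm_of_mem hw
    have hnw : ‖(n : ℂ) * (2 * Real.pi * Complex.I)‖ = |(n : ℝ)| * (2 * Real.pi) := by
      simp [norm_mul, Complex.norm_real, _root_.abs_of_nonneg Real.pi_pos.le]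
    rw [hnw] at hle
    have hn : n = 0 := by
      by_contra hn
      have h1 : (1 : ℝ) ≤ |(n : ℝ)| := by
        rw [← Int.cast_abs]; exact_mod_cast Int.one_le_abs (by omega)
      nlinarith [Real.pi_gt_three]
    simp [hn]
  set h : ℂ → ℂ := fun w => if w = 0 then 1 else w / (Complex.exp w - 1) with hh
  have hcont : ContinuousOn h (spectrum ℂ X) := by
    intro w hw
    rcases eq_or_ne w 0 with rfl | hw0
    · apply ContinuousAt.continuousWithinAt
      rw [← continuousWithinAt_compl_self]
      have h0 : h 0 = 1 := by simp [hh]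
      rw [ContinuousWithinAt, h0]
      have hd : HasDerivAt Complex.exp 1 0 := by simpa using Complex.hasDerivAt_exp 0
      have hslope := hasDerivAt_iff_tendsto_slope.mp hd
      have htend : Filter.Tendsto (fun z => (slope Complex.exp 0 z)⁻¹)
          (nhdsWithin 0 {0}ᶜ) (nhds 1) := by
        simpa using hslope.inv₀ one_ne_zero
      refine htend.congr' ?_
      filter_upwards [self_mem_nhdsWithin] with z hz
      simp only [Set.mem_compl_iff, Set.mem_singleton_iff] at hz
      simp [slope_def_field, hh, hz, inv_div]
    · have hexp : Complex.exp w ≠ 1 := fun hc => hw0 (key w hw hc)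
      apply ContinuousAt.continuousWithinAt
      have hca : ContinuousAt (fun z => z / (Complex.exp z - 1)) w :=
        continuousAt_id.div ((Complex.continuous_exp.continuousAt).sub continuousAt_const)
          (sub_ne_zero.mpr hexp)
      refine hca.congr ?_
      filter_upwards [isOpen_compl_singleton.mem_nhds hw0] with z hz
      simp only [Set.mem_compl_iff, Set.mem_singleton_iff] at hz
      simp [hh, hz]
  have hmain : X = cfc h X * (NormedSpace.exp X - 1) := by
    conv_lhs => rw [← cfc_id ℂ X]
    have heq : cfc (id : ℂ → ℂ) X = cfc (fun w => h w * (Complex.exp w - 1)) X := by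
      apply cfc_congr
      intro w hw
      rcases eq_or_ne w 0 with rfl | hw0
      · simp [hh]
      · have hexp : Complex.exp w ≠ 1 := fun hc => hw0 (key w hw hc)
        simp only [hh, if_neg hw0, id_eq]
        rw [div_mul_eq_mul_div, mul_div_assoc, div_self (sub_ne_zero.mpr hexp), mul_one]
    rw [heq, cfc_mul h (fun w => Complex.exp w - 1) X hcont ((Complex.continuous_exp.sub continuous_const).continuousOn)]
    congr 1
    rw [cfc_sub _ _ X (Complex.continuous_exp.continuousOn) (continuousOn_const),
      Complex.exp_eq_exp_ℂ, CFC.exp_eq_normedSpace_exp, cfc_const 1 X]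
    simp
  rw [hmain]
  have h0 : (NormedSpace.exp X - 1) ψ = 0 := by simp [ContinuousLinearMap.sub_apply, hψ]
  rw [ContinuousLinearMap.mul_apply, h0, map_zero]

lemma aux_exp_fixed (X : H' →L[ℂ] H') (ψ : H') (hψ : X ψ = 0) :
    NormedSpace.exp X ψ = ψ := by
  have hsum : Summable fun n : ℕ => ((n.factorial : ℂ)⁻¹ • X ^ n) :=
    NormedSpace.expSeries_summable' X
  rw [NormedSpace.exp_eq_tsum ℂ]
  have htsum := (ContinuousLinearMap.apply ℂ H' ψ).map_tsum hsum
  simp only [ContinuousLinearMap.apply_apply] at htsum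
  rw [htsum, tsum_eq_single 0]
  · simp
  · intro n hn
    obtain ⟨m, rfl⟩ := Nat.exists_eq_succ_of_ne_zero hn
    simp [pow_succ, ContinuousLinearMap.smul_apply, ContinuousLinearMap.mul_apply, hψ]

lemma aux_exp_smul_one_add (c : ℂ) (D : H' →L[ℂ] H') :
    NormedSpace.exp (c • (1 : H' →L[ℂ] H') + D) = Complex.exp c • NormedSpace.exp D := by
  letI : NormedAlgebra ℚ (H' →L[ℂ] H') := NormedAlgebra.restrictScalars ℚ ℂ _
  rw [NormedSpace.exp_add_of_commute ((Commute.one_left D).smul_left c)]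
  have h1 : NormedSpace.exp (c • (1 : H' →L[ℂ] H')) = Complex.exp c • (1 : H' →L[ℂ] H') := by
    rw [← Algebra.algebraMap_eq_smul_one, ← NormedSpace.algebraMap_exp_comm,
      Algebra.algebraMap_eq_smul_one, Complex.exp_eq_exp_ℂ]
  rw [h1, smul_mul_assoc, one_mul]

end Aux

set_option maxHeartbeats 1000000
set_option synthInstance.maxHeartbeats 200000

/-- For a bounded self-adjoint operator `H` with a simple eigenvalue `E` and normalized
eigenfunction `φ`, and any vectors `u, v`:
`|⟨u, φ⟩⟨φ, v⟩| ≤ sup_t |⟨u, e^{-itH} v⟩|`. -/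
theorem eigenprojection_le_sup_evolution
    {H' : Type*} [NormedAddCommGroup H'] [InnerProductSpace ℂ H'] [CompleteSpace H']
    (H : H' →L[ℂ] H') (hH : IsSelfAdjoint H)
    (E : ℝ) (φ : H') (hφnorm : ‖φ‖ = 1)
    (hφeig : H φ = (E : ℂ) • φ)
    (hsimple : ∀ ψ : H', H ψ = (E : ℂ) • ψ → ∃ a : ℂ, ψ = a • φ)
    (u v : H') :
    ‖⟪u, φ⟫_ℂ * ⟪φ, v⟫_ℂ‖ ≤
      ⨆ t : ℝ, ‖⟪u, (NormedSpace.exp ((-(t : ℂ) * Complex.I) • H)) v⟫_ℂ‖ := by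
  have hφ0 : φ ≠ 0 := by intro h; rw [h, norm_zero] at hφnorm; norm_num at hφnorm
  have : Nontrivial H' := nontrivial_of_ne φ 0 hφ0
  letI : NormedAlgebra ℚ (H' →L[ℂ] H') := NormedAlgebra.restrictScalars ℚ ℂ _
  -- the evolution operators are unitary
  set Uop : ℝ → (H' →L[ℂ] H') := fun t => NormedSpace.exp ((-(t : ℂ) * Complex.I) • H)
    with hUop
  have hUskew : ∀ t : ℝ, ((-(t : ℂ) * Complex.I) • H) ∈ skewAdjoint (H' →L[ℂ] H') := by
    intro t
    rw [skewAdjoint.mem_iff, star_smul, hH.star_eq, ← neg_smul]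
    congr 1
    simp [Complex.star_def]
  have hUnorm : ∀ t : ℝ, ‖Uop t‖ = 1 := fun t =>
    CStarRing.norm_of_mem_unitary (NormedSpace.exp_mem_unitary_of_mem_skewAdjoint (hUskew t))
  -- boundedness of the family of inner products
  have hBdd : BddAbove (Set.range fun t : ℝ => ‖⟪u, Uop t v⟫_ℂ‖) := by
    refine ⟨‖u‖ * ‖v‖, ?_⟩
    rintro x ⟨t, rfl⟩
    calc ‖⟪u, Uop t v⟫_ℂ‖ ≤ ‖u‖ * ‖Uop t v‖ := norm_inner_le_norm _ _
      _ ≤ ‖u‖ * (‖Uop t‖ * ‖v‖) := by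
          gcongr; exact (Uop t).le_opNorm v
      _ = ‖u‖ * ‖v‖ := by rw [hUnorm t, one_mul]
  set M : ℝ := ⨆ t : ℝ, ‖⟪u, Uop t v⟫_ℂ‖ with hM
  -- basic bound on E
  have hE : |E| ≤ ‖H‖ := by
    have h1 : ‖H φ‖ ≤ ‖H‖ * ‖φ‖ := H.le_opNorm φ
    rw [hφeig, norm_smul, hφnorm, mul_one, mul_one] at h1
    simpa using h1
  set s : ℝ := (‖H‖ + 1)⁻¹ with hs
  have hspos : 0 < s := by positivity
  set X : H' →L[ℂ] H' := (Complex.I * (s : ℂ)) • ((E : ℂ) • 1 - H) with hX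
  have hXnorm : ‖X‖ < 2 := by
    have h1 : ‖(E : ℂ) • (1 : H' →L[ℂ] H') - H‖ ≤ |E| * 1 + ‖H‖ := by
      calc ‖(E : ℂ) • (1 : H' →L[ℂ] H') - H‖ ≤ ‖(E : ℂ) • (1 : H' →L[ℂ] H')‖ + ‖H‖ :=
            norm_sub_le _ _
        _ ≤ |E| * 1 + ‖H‖ := by
            rw [norm_smul]
            gcongr
            · simp
            · exact ContinuousLinearMap.norm_id_le
    have h2 : ‖X‖ ≤ s * (|E| * 1 + ‖H‖) := by
      rw [hX, norm_smul]
      have : ‖Complex.I * (s : ℂ)‖ = s := by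
        simp [norm_mul, Complex.norm_real, _root_.abs_of_nonneg hspos.le]
      rw [this]
      gcongr
    have h3 : s * (|E| * 1 + ‖H‖) ≤ s * (2 * ‖H‖) := by
      gcongr
      nlinarith
    have h4 : s * (2 * ‖H‖) < 2 := by
      rw [hs]
      rw [inv_mul_lt_iff₀ (by positivity)]
      nlinarith [norm_nonneg H]
    linarith
  have hMsa : IsSelfAdjoint ((E : ℂ) • (1 : H' →L[ℂ] H') - H) := by
    apply IsSelfAdjoint.sub _ hH
    rw [IsSelfAdjoint, star_smul, star_one, Complex.star_def, Complex.conj_ofReal]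
  have hXstar : star X = -X := by
    rw [hX, star_smul, hMsa.star_eq, ← neg_smul]
    congr 1
    simp [Complex.star_def]
  have hsn : IsStarNormal X := by
    constructor
    rw [hXstar]
    exact (Commute.refl X).neg_left
  set T : H' →L[ℂ] H' := NormedSpace.exp X with hT
  have hTunit : T ∈ unitary (H' →L[ℂ] H') := by
    apply NormedSpace.exp_mem_unitary_of_mem_skewAdjoint
    rw [skewAdjoint.mem_iff]; exact hXstar
  have hTle : ‖T‖ ≤ 1 := le_of_eq (CStarRing.norm_of_mem_unitary hTunit)
  have hXφ : X φ = 0 := by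
    rw [hX]
    simp [ContinuousLinearMap.smul_apply, ContinuousLinearMap.sub_apply, hφeig]
  have hTφ : T φ = φ := aux_exp_fixed X φ hXφ
  -- the fixed-point subspace is the span of φ
  have hFspan : T.eqLocus (1 : H' →L[ℂ] H') = (ℂ ∙ φ) := by
    apply le_antisymm
    · intro ψ hψ
      have hψ' : T ψ = ψ := hψ
      have hXψ : X ψ = 0 := aux_key_cfc X hsn hXnorm ψ hψ'
      have hMψ : ((E : ℂ) • (1 : H' →L[ℂ] H') - H) ψ = 0 := by
        rw [hX] at hXψ
        simp only [ContinuousLinearMap.smul_apply] at hXψ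
        rcases smul_eq_zero.mp hXψ with hc | hv
        · exfalso
          apply Complex.I_ne_zero
          have := mul_eq_zero.mp hc
          rcases this with h | h
          · exact h
          · exfalso; exact hspos.ne' (by exact_mod_cast h)
        · exact hv
      have : H ψ = (E : ℂ) • ψ := by
        simp only [ContinuousLinearMap.sub_apply, ContinuousLinearMap.smul_apply,
          ContinuousLinearMap.one_apply, sub_eq_zero] at hMψ
        exact hMψ.symm
      obtain ⟨a, rfl⟩ := hsimple ψ this
      exact Submodule.smul_mem _ a (Submodule.mem_span_singleton_self φ)
    · rw [Submodule.span_le, Set.singleton_subset_iff]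
      exact hTφ
  -- mean ergodic theorem
  have htend := T.tendsto_birkhoffAverage_orthogonalProjection hTle v
  have hproj : (((T.eqLocus (1 : H' →L[ℂ] H')).orthogonalProjectionOnto v : H')) =
      ⟪φ, v⟫_ℂ • φ := by
    have key : ∀ K : Submodule ℂ H', K = (ℂ ∙ φ) → ∀ [K.HasOrthogonalProjection],
        (K.orthogonalProjectionOnto v : H') = ⟪φ, v⟫_ℂ • φ := by
      rintro K rfl _
      exact Submodule.starProjection_unit_singleton ℂ hφnorm v
    exact key _ hFspan
  -- each Birkhoff average's pairing with u is bounded by M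
  have hterm : ∀ k : ℕ, ‖⟪u, (T ^ k) v⟫_ℂ‖ ≤ M := by
    intro k
    have hpow : T ^ k = NormedSpace.exp (k • X) := (NormedSpace.exp_nsmul k X).symm
    have hdecomp : (k : ℕ) • X =
        (Complex.I * (((k : ℝ) * s * E : ℝ) : ℂ)) • (1 : H' →L[ℂ] H') +
          (-(((k : ℝ) * s : ℝ) : ℂ) * Complex.I) • H := by
      rw [← Nat.cast_smul_eq_nsmul ℂ, hX]
      push_cast
      module
    have : ‖⟪u, (T ^ k) v⟫_ℂ‖ = ‖⟪u, Uop ((k : ℝ) * s) v⟫_ℂ‖ := by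
      rw [hpow, hdecomp, aux_exp_smul_one_add]
      rw [ContinuousLinearMap.smul_apply, inner_smul_right, norm_mul]
      have habs : ‖Complex.exp (Complex.I * (((k : ℝ) * s * E : ℝ) : ℂ))‖ = 1 := by
        rw [mul_comm]
        exact Complex.norm_exp_ofReal_mul_I _
      rw [habs, one_mul, hUop]
    rw [this]
    exact le_ciSup hBdd ((k : ℝ) * s)
  -- conclude
  have hlim : Filter.Tendsto (fun n => ‖⟪u, birkhoffAverage ℂ T _root_.id n v⟫_ℂ‖)
      Filter.atTop (nhds ‖⟪u, ⟪φ, v⟫_ℂ • φ⟫_ℂ‖) := by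
    rw [← hproj]
    exact ((Filter.Tendsto.inner tendsto_const_nhds htend).norm)
  have hbound : ∀ᶠ n in Filter.atTop, ‖⟪u, birkhoffAverage ℂ T _root_.id n v⟫_ℂ‖ ≤ M := by
    filter_upwards [Filter.eventually_ge_atTop 1] with n hn
    have havg : ⟪u, birkhoffAverage ℂ T _root_.id n v⟫_ℂ =
        (n : ℂ)⁻¹ * ∑ k ∈ Finset.range n, ⟪u, (T ^ k) v⟫_ℂ := by
      rw [birkhoffAverage, birkhoffSum, inner_smul_right]
      congr 1
      rw [inner_sum]
      apply Finset.sum_congr rfl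
      intro k _
      congr 1
      simp [ContinuousLinearMap.coe_pow]
    rw [havg, norm_mul]
    have h1 : ‖∑ k ∈ Finset.range n, ⟪u, (T ^ k) v⟫_ℂ‖ ≤ (n : ℝ) * M := by
      calc ‖∑ k ∈ Finset.range n, ⟪u, (T ^ k) v⟫_ℂ‖ ≤
            ∑ k ∈ Finset.range n, ‖⟪u, (T ^ k) v⟫_ℂ‖ := norm_sum_le _ _
        _ ≤ ∑ _k ∈ Finset.range n, M := Finset.sum_le_sum fun k _ => hterm k
        _ = (n : ℝ) * M := by rw [Finset.sum_const, Finset.card_range]; ring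
    have h2 : ‖((n : ℂ))⁻¹‖ = ((n : ℝ))⁻¹ := by
      rw [norm_inv]; congr 1; exact Complex.norm_natCast n
    rw [h2]
    have hn0 : (0 : ℝ) < n := by exact_mod_cast hn
    calc ((n : ℝ))⁻¹ * ‖∑ k ∈ Finset.range n, ⟪u, (T ^ k) v⟫_ℂ‖ ≤
          ((n : ℝ))⁻¹ * ((n : ℝ) * M) := by gcongr
      _ = M := by field_simp
  have hfinal : ‖⟪u, ⟪φ, v⟫_ℂ • φ⟫_ℂ‖ ≤ M := le_of_tendsto hlim hbound
  calc ‖⟪u, φ⟫_ℂ * ⟪φ, v⟫_ℂ‖ = ‖⟪u, ⟪φ, v⟫_ℂ • φ⟫_ℂ‖ := by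
        rw [inner_smul_right]; rw [norm_mul, norm_mul]; ring
    _ ≤ M := hfinal
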